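/- arXiv:1107.4345 — 2 statements merged into one kernel-verified Lean document; each statement's English description precedes it below -/
import Mathlib

section
/- Let A be an algebra (under pointwise addition and multiplication) of continuous complex-valued functions on the closed unit disk 𝔻̄ such that (i) for every f ∈ A and every z ∈ 𝔻, |f(z)| ≤ ‖f‖_𝕋, and (ii) A contains the disk algebra A(𝔻). Then A = A(𝔻). -/
open Complex Metric

/-- The sup of `|f|` over the unit circle `𝕋`. -/
noncomputable def circleSup (f : ℂ → ℂ) : ℝ :=
  ⨆ ζ : sphere (0:ℂ) 1, ‖f ζ‖

/-- The disk algebra `A(𝔻)`: functions continuous on the closed unit disk and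
holomorphic on the open unit disk. -/
def diskAlgebra : Set (ℂ → ℂ) :=
  {f | ContinuousOn f (closedBall 0 1) ∧ DifferentiableOn ℂ f (ball 0 1)}

noncomputable section
namespace RudinAux

abbrev Sph : Set ℂ := sphere (0:ℂ) 1

instance : Nonempty Sph := ⟨⟨1, by simp⟩⟩

/-- Parametrization of the circle. -/
def q (θ : ℝ) : Sph := ⟨Complex.exp (θ * I), by simp [Complex.norm_exp]⟩

lemma q_cont : Continuous q := by
  apply Continuous.subtype_mk
  exact Complex.continuous_exp.comp (by continuity)

/-- The coordinate function on the circle. -/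
def xi : C(Sph, ℂ) := ⟨fun ζ => (ζ:ℂ), continuous_subtype_val⟩

lemma xi_pow_apply (m : ℕ) (ζ : Sph) : (xi^m) ζ = (ζ:ℂ)^m := rfl

/-- Fourier coefficients on the circle. -/
def co (v : C(Sph,ℂ)) (n : ℤ) : ℂ :=
  (((2*Real.pi : ℝ)) : ℂ)⁻¹ * ∫ θ in (0:ℝ)..(2*Real.pi), Complex.exp (-(n:ℂ) * θ * I) * v (q θ)

lemma co_integrand_cont (v : C(Sph,ℂ)) (n : ℤ) :
    Continuous (fun θ : ℝ => Complex.exp (-(n:ℂ) * θ * I) * v (q θ)) :=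
  (Complex.continuous_exp.comp (by continuity)).mul (v.continuous.comp q_cont)

lemma norm_exp_real_mul_I (c : ℂ) (θ : ℝ) (h : c.re = 0) :
    ‖Complex.exp (c * θ)‖ = 1 := by
  rw [Complex.norm_exp]
  have : (c * θ).re = 0 := by simp [Complex.mul_re, h, Complex.ofReal_im]
  rw [this, Real.exp_zero]

lemma norm_co_le (v : C(Sph,ℂ)) (n : ℤ) : ‖co v n‖ ≤ ‖v‖ := by
  have h2 := intervalIntegral.norm_integral_le_of_norm_le_const (C := ‖v‖)
    (a := 0) (b := 2*Real.pi)
    (f := fun θ : ℝ => Complex.exp (-(n:ℂ) * θ * I) * v (q θ)) (by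
    intro θ _
    rw [norm_mul]
    have : ‖Complex.exp (-(n:ℂ) * θ * I)‖ = 1 := by
      rw [mul_assoc, mul_comm (θ:ℂ) I, ← mul_assoc]
      exact norm_exp_real_mul_I _ _ (by simp)
    rw [this, one_mul]
    exact v.norm_coe_le_norm _)
  have hpi : (0:ℝ) < 2*Real.pi := by positivity
  rw [co, norm_mul, norm_inv, Complex.norm_real, Real.norm_eq_abs, abs_of_pos hpi]
  calc (2*Real.pi)⁻¹ * ‖∫ θ in (0:ℝ)..(2*Real.pi), Complex.exp (-(n:ℂ) * θ * I) * v (q θ)‖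
      ≤ (2*Real.pi)⁻¹ * (‖v‖ * |2*Real.pi - 0|) := by
        apply mul_le_mul_of_nonneg_left h2 (by positivity)
      _ = ‖v‖ := by
        rw [sub_zero, abs_of_pos hpi]
        field_simp

lemma integral_char (m : ℤ) : (∫ θ in (0:ℝ)..(2*Real.pi), Complex.exp ((m:ℂ) * I * θ))
    = if m = 0 then ((2*Real.pi:ℝ):ℂ) else 0 := by
  by_cases hm : m = 0
  · simp [hm]
  · rw [if_neg hm]
    have hc : (m:ℂ) * I ≠ 0 := by
      simp [Complex.I_ne_zero, Int.cast_injective.ne_iff, hm]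
    rw [integral_exp_mul_complex hc]
    have : (m:ℂ) * I * ((2*Real.pi:ℝ):ℂ) = (m:ℤ) * (2 * (Real.pi:ℂ) * I) := by push_cast; ring
    rw [this, Complex.exp_int_mul_two_pi_mul_I]
    simp

lemma two_pi_ne : ((2*Real.pi:ℝ):ℂ) ≠ 0 := by
  simp [Real.pi_ne_zero]

lemma co_xi_pow (m : ℕ) (n : ℤ) : co (xi^m) n = if n = (m:ℤ) then 1 else 0 := by
  have hint : ∀ θ : ℝ, Complex.exp (-(n:ℂ) * θ * I) * (xi^m) (q θ)
      = Complex.exp ((((m:ℤ)-n : ℤ):ℂ) * I * θ) := by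
    intro θ
    rw [xi_pow_apply]
    show Complex.exp (-(n:ℂ) * θ * I) * (Complex.exp (θ * I))^m = _
    rw [← Complex.exp_nat_mul, ← Complex.exp_add]
    congr 1
    push_cast
    ring
  rw [co]
  simp only [hint]
  rw [integral_char]
  by_cases h : n = (m:ℤ)
  · rw [if_pos h, if_pos (by omega)]
    exact inv_mul_cancel₀ two_pi_ne
  · rw [if_neg h, if_neg (by omega), mul_zero]

lemma co_star_xi_pow (m : ℕ) (n : ℤ) : co (star (xi^m)) n = if n = -(m:ℤ) then 1 else 0 := by
  have hint : ∀ θ : ℝ, Complex.exp (-(n:ℂ) * θ * I) * (star (xi^m)) (q θ)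
      = Complex.exp (((-(m:ℤ)-n : ℤ):ℂ) * I * θ) := by
    intro θ
    have : (star (xi^m)) (q θ) = (starRingEnd ℂ) ((Complex.exp (θ * I))^m) := rfl
    rw [this, ← Complex.exp_nat_mul, ← Complex.exp_conj, ← Complex.exp_add]
    congr 1
    rw [map_mul]
    simp [Complex.conj_I, Complex.conj_ofReal]
    ring
  rw [co]
  simp only [hint]
  rw [integral_char]
  by_cases h : n = -(m:ℤ)
  · rw [if_pos h, if_pos (by omega)]
    exact inv_mul_cancel₀ two_pi_ne
  · rw [if_neg h, if_neg (by omega), mul_zero]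

lemma co_add (v w : C(Sph,ℂ)) (n : ℤ) : co (v+w) n = co v n + co w n := by
  rw [co, co, co, ← mul_add, ← intervalIntegral.integral_add
    ((co_integrand_cont v n).intervalIntegrable _ _) ((co_integrand_cont w n).intervalIntegrable _ _)]
  congr 1
  apply intervalIntegral.integral_congr
  intro θ _
  simp [mul_add]

lemma co_smul (c : ℂ) (v : C(Sph,ℂ)) (n : ℤ) : co (c • v) n = c * co v n := by
  rw [co, co]
  have h : ∀ θ:ℝ, Complex.exp (-(n:ℂ) * θ * I) * (c • v) (q θ)
      = c * (Complex.exp (-(n:ℂ) * θ * I) * v (q θ)) := by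
    intro θ; simp; ring
  simp only [h]
  rw [intervalIntegral.integral_const_mul]
  ring

/-! ### The Poisson-type functional -/

def Lfun (a : ℂ) (v : C(Sph,ℂ)) : ℂ :=
  (∑' k : ℕ, co v k * a^k) + ∑' k : ℕ, co v (-(k+1 : ℕ)) * (starRingEnd ℂ a)^(k+1 : ℕ)

variable {a : ℂ}

lemma term1_bound (v : C(Sph,ℂ)) (k : ℕ) : ‖co v k * a^k‖ ≤ ‖v‖ * ‖a‖ ^ k := by
  rw [norm_mul, norm_pow]
  exact mul_le_mul_of_nonneg_right (norm_co_le v _) (by positivity)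

lemma term2_bound (ha : ‖a‖ < 1) (v : C(Sph,ℂ)) (k : ℕ) :
    ‖co v (-(k+1:ℕ)) * (starRingEnd ℂ a)^(k+1:ℕ)‖ ≤ ‖v‖ * ‖a‖ ^ k := by
  rw [norm_mul, norm_pow]
  have h1 : ‖(starRingEnd ℂ) a‖ = ‖a‖ := by simp
  rw [h1, pow_succ]
  calc ‖co v _‖ * (‖a‖ ^ k * ‖a‖)
      ≤ ‖v‖ * (‖a‖ ^ k * 1) := by
        apply mul_le_mul (norm_co_le v _) _ (by positivity) (norm_nonneg v)
        exact mul_le_mul_of_nonneg_left ha.le (by positivity)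
      _ = ‖v‖ * ‖a‖ ^ k := by ring

lemma summable_geo (ha : ‖a‖ < 1) (v : C(Sph,ℂ)) :
    Summable (fun k : ℕ => ‖v‖ * ‖a‖ ^ k) :=
  (summable_geometric_of_lt_one (norm_nonneg a) ha).mul_left ‖v‖

lemma summable_L1 (ha : ‖a‖ < 1) (v : C(Sph,ℂ)) :
    Summable (fun k : ℕ => co v k * a^k) :=
  Summable.of_norm (Summable.of_nonneg_of_le (fun k => norm_nonneg _)
    (term1_bound v) (summable_geo ha v))

lemma summable_L2 (ha : ‖a‖ < 1) (v : C(Sph,ℂ)) :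
    Summable (fun k : ℕ => co v (-(k+1 : ℕ)) * (starRingEnd ℂ a)^(k+1 : ℕ)) :=
  Summable.of_norm (Summable.of_nonneg_of_le (fun k => norm_nonneg _)
    (term2_bound ha v) (summable_geo ha v))

lemma Lfun_add (ha : ‖a‖ < 1) (v w : C(Sph,ℂ)) :
    Lfun a (v + w) = Lfun a v + Lfun a w := by
  rw [Lfun, Lfun, Lfun]
  simp only [co_add, add_mul]
  rw [Summable.tsum_add (summable_L1 ha v) (summable_L1 ha w),
      Summable.tsum_add (summable_L2 ha v) (summable_L2 ha w)]
  ring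

lemma Lfun_smul (c : ℂ) (v : C(Sph,ℂ)) : Lfun a (c • v) = c * Lfun a v := by
  rw [Lfun, Lfun]
  simp only [co_smul, mul_assoc]
  rw [tsum_mul_left, tsum_mul_left]
  ring

lemma Lfun_bound (ha : ‖a‖ < 1) (v : C(Sph,ℂ)) :
    ‖Lfun a v‖ ≤ (2 * (1 - ‖a‖)⁻¹) * ‖v‖ := by
  have hg : ∑' k : ℕ, ‖v‖ * ‖a‖ ^ k = ‖v‖ * (1 - ‖a‖)⁻¹ := by
    rw [tsum_mul_left, tsum_geometric_of_lt_one (norm_nonneg a) ha]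
  have b1 : ‖∑' k : ℕ, co v k * a^k‖ ≤ ‖v‖ * (1 - ‖a‖)⁻¹ := by
    rw [← hg]
    refine (norm_tsum_le_tsum_norm ?_).trans (Summable.tsum_le_tsum (term1_bound v) ?_ (summable_geo ha v))
    · exact Summable.of_nonneg_of_le (fun k => norm_nonneg _) (term1_bound v) (summable_geo ha v)
    · exact Summable.of_nonneg_of_le (fun k => norm_nonneg _) (term1_bound v) (summable_geo ha v)
  have b2 : ‖∑' k : ℕ, co v (-(k+1 : ℕ)) * (starRingEnd ℂ a)^(k+1 : ℕ)‖
      ≤ ‖v‖ * (1 - ‖a‖)⁻¹ := by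
    rw [← hg]
    refine (norm_tsum_le_tsum_norm ?_).trans (Summable.tsum_le_tsum (term2_bound ha v) ?_ (summable_geo ha v))
    · exact Summable.of_nonneg_of_le (fun k => norm_nonneg _) (term2_bound ha v) (summable_geo ha v)
    · exact Summable.of_nonneg_of_le (fun k => norm_nonneg _) (term2_bound ha v) (summable_geo ha v)
  calc ‖Lfun a v‖ ≤ ‖∑' k : ℕ, co v k * a^k‖
        + ‖∑' k : ℕ, co v (-(k+1 : ℕ)) * (starRingEnd ℂ a)^(k+1 : ℕ)‖ := norm_add_le _ _
    _ ≤ ‖v‖ * (1 - ‖a‖)⁻¹ + ‖v‖ * (1 - ‖a‖)⁻¹ := add_le_add b1 b2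
    _ = (2 * (1 - ‖a‖)⁻¹) * ‖v‖ := by ring

def L (ha : ‖a‖ < 1) : C(Sph,ℂ) →L[ℂ] ℂ :=
  LinearMap.mkContinuous
    { toFun := Lfun a
      map_add' := Lfun_add ha
      map_smul' := fun c v => Lfun_smul c v }
    (2 * (1 - ‖a‖)⁻¹) (Lfun_bound ha)

lemma L_apply (ha : ‖a‖ < 1) (v : C(Sph,ℂ)) : L ha v = Lfun a v := rfl

lemma L_xi_pow (ha : ‖a‖ < 1) (m : ℕ) : L ha (xi^m) = a^m := by
  rw [L_apply, Lfun]
  have h2 : ∀ k : ℕ, co (xi^m) (-(k+1:ℕ)) * (starRingEnd ℂ a)^(k+1:ℕ) = 0 := by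
    intro k
    rw [co_xi_pow, if_neg (by omega), zero_mul]
  have h1 : (∑' k : ℕ, co (xi^m) k * a^k) = a^m := by
    rw [tsum_eq_single m]
    · rw [co_xi_pow, if_pos rfl, one_mul]
    · intro k hk
      rw [co_xi_pow, if_neg (by exact_mod_cast hk), zero_mul]
  rw [h1, tsum_congr h2, tsum_zero, add_zero]

lemma L_star_xi_pow (ha : ‖a‖ < 1) (m : ℕ) :
    L ha (star (xi^m)) = (starRingEnd ℂ a)^m := by
  rcases m with - | j
  · rw [pow_zero, star_one, ← pow_zero xi, L_xi_pow ha, pow_zero, pow_zero]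
  · rw [L_apply, Lfun]
    have h1 : ∀ k : ℕ, co (star (xi^(j+1))) k * a^k = 0 := by
      intro k
      rw [co_star_xi_pow, if_neg (by omega), zero_mul]
    have h2 : (∑' k : ℕ, co (star (xi^(j+1))) (-(k+1:ℕ)) * (starRingEnd ℂ a)^(k+1:ℕ))
        = (starRingEnd ℂ a)^(j+1) := by
      rw [tsum_eq_single j]
      · rw [co_star_xi_pow, if_pos (by omega), one_mul]
      · intro k hk
        rw [co_star_xi_pow, if_neg (by omega), zero_mul]
    rw [h2, tsum_congr h1, tsum_zero, zero_add]

lemma Lfun_zero_eval (v : C(Sph,ℂ)) : Lfun 0 v = co v 0 := by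
  rw [Lfun]
  have h2 : ∀ k : ℕ, co v (-(k+1:ℕ)) * (starRingEnd ℂ (0:ℂ))^(k+1:ℕ) = 0 := by
    intro k
    rw [map_zero, zero_pow (by omega), mul_zero]
  have h1 : (∑' k : ℕ, co v k * (0:ℂ)^k) = co v 0 := by
    rw [tsum_eq_single 0]
    · rw [pow_zero, mul_one]
      norm_num
    · intro k hk
      rw [zero_pow hk, mul_zero]
  rw [h1, tsum_congr h2, tsum_zero, add_zero]

/-! ### Density of trigonometric polynomials -/

def G : Set C(Sph, ℂ) := Set.range (fun m : ℕ => xi^m) ∪ Set.range (fun m : ℕ => star (xi^m))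

def W : Submodule ℂ C(Sph, ℂ) := Submodule.span ℂ G

lemma xi_mul_star : xi * star xi = 1 := by
  ext ζ
  show (ζ:ℂ) * (starRingEnd ℂ) (ζ:ℂ) = 1
  rw [Complex.mul_conj]
  have hζ : ‖(ζ:ℂ)‖ = 1 := by
    have := ζ.2
    simpa using this
  rw [Complex.normSq_eq_norm_sq, hζ]
  norm_num

lemma pow_mul_star_pow (m n : ℕ) : xi^m * star (xi^n) ∈ G := by
  rcases le_or_gt n m with h | h
  · have : xi^m * star (xi^n) = xi^(m-n) := by
      rw [star_pow]
      have hn : m - n + n = m := Nat.sub_add_cancel h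
      calc xi^m * (star xi)^n = xi^(m-n) * (xi^n * (star xi)^n) := by
            rw [← mul_assoc, ← pow_add, hn]
        _ = xi^(m-n) * (xi * star xi)^n := by rw [mul_pow]
        _ = xi^(m-n) := by rw [xi_mul_star, one_pow, mul_one]
    rw [this]
    exact Or.inl ⟨m-n, rfl⟩
  · have : xi^m * star (xi^n) = star (xi^(n-m)) := by
      rw [star_pow, star_pow]
      have hn : n - m + m = n := Nat.sub_add_cancel h.le
      calc xi^m * (star xi)^n = xi^m * ((star xi)^(n-m) * (star xi)^m) := by
            rw [← pow_add, hn]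
        _ = (star xi)^(n-m) * (xi * star xi)^m := by rw [mul_pow]; ring
        _ = (star xi)^(n-m) := by rw [xi_mul_star, one_pow, mul_one]
    rw [this]
    exact Or.inr ⟨n-m, rfl⟩

lemma gen_mul_gen : ∀ g₁ ∈ G, ∀ g₂ ∈ G, g₁ * g₂ ∈ G := by
  rintro g₁ (⟨m, rfl⟩ | ⟨m, rfl⟩) g₂ (⟨n, rfl⟩ | ⟨n, rfl⟩)
  · exact Or.inl ⟨m + n, by simp [pow_add]⟩
  · exact pow_mul_star_pow m n
  · rw [mul_comm]
    exact pow_mul_star_pow n m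
  · exact Or.inr ⟨m + n, by simp only [star_pow]; rw [← pow_add]⟩

lemma W_mul_mem {x y : C(Sph,ℂ)} (hx : x ∈ W) (hy : y ∈ W) : x * y ∈ W := by
  induction hx using Submodule.span_induction with
  | mem g hg =>
      induction hy using Submodule.span_induction with
      | mem g' hg' => exact Submodule.subset_span (gen_mul_gen g hg g' hg')
      | zero => rw [mul_zero]; exact W.zero_mem
      | add u v hu hv pu pv => rw [mul_add]; exact W.add_mem pu pv
      | smul c u hu pu => rw [mul_smul_comm]; exact W.smul_mem c pu
  | zero => rw [zero_mul]; exact W.zero_mem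
  | add u v hu hv pu pv => rw [add_mul]; exact W.add_mem pu pv
  | smul c u hu pu => rw [smul_mul_assoc]; exact W.smul_mem c pu

lemma W_star_mem {x : C(Sph,ℂ)} (hx : x ∈ W) : star x ∈ W := by
  induction hx using Submodule.span_induction with
  | mem g hg =>
      rcases hg with ⟨m, rfl⟩ | ⟨m, rfl⟩
      · exact Submodule.subset_span (Or.inr ⟨m, rfl⟩)
      · rw [star_star]; exact Submodule.subset_span (Or.inl ⟨m, rfl⟩)
  | zero => rw [star_zero]; exact W.zero_mem
  | add u v hu hv pu pv => rw [star_add]; exact W.add_mem pu pv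
  | smul c u hu pu => rw [star_smul]; exact W.smul_mem _ pu

lemma W_one_mem : (1 : C(Sph,ℂ)) ∈ W :=
  Submodule.subset_span (Or.inl ⟨0, by simp⟩)

def Wstar : StarSubalgebra ℂ C(Sph, ℂ) where
  carrier := W
  mul_mem' := W_mul_mem
  add_mem' := W.add_mem
  one_mem' := W_one_mem
  zero_mem' := W.zero_mem
  algebraMap_mem' := fun c => by
    have : algebraMap ℂ C(Sph,ℂ) c = c • (1 : C(Sph,ℂ)) := by
      rw [Algebra.algebraMap_eq_smul_one]
    rw [this]
    exact W.smul_mem c W_one_mem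
  star_mem' := W_star_mem

lemma W_dense : Dense (W : Set C(Sph,ℂ)) := by
  have h : Wstar.topologicalClosure = ⊤ := by
    apply ContinuousMap.starSubalgebra_topologicalClosure_eq_top_of_separatesPoints
    intro x y hxy
    refine ⟨_, ⟨xi, Submodule.subset_span (Or.inl ⟨1, by simp⟩), rfl⟩, ?_⟩
    exact fun h => hxy (Subtype.ext h)
  have : closure (W : Set C(Sph,ℂ)) = Set.univ := by
    have := congrArg (fun s : StarSubalgebra ℂ C(Sph,ℂ) => (s : Set C(Sph,ℂ))) h
    have h' : closure (Wstar : Set C(Sph,ℂ)) = Set.univ := by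
      simpa [StarSubalgebra.topologicalClosure_coe] using this
    exact h'
  rw [dense_iff_closure_eq, this]

/-! ### Properties of norm-one extensions -/

variable {Φ : C(Sph,ℂ) →L[ℂ] ℂ} (hn : ‖Φ‖ ≤ 1) (h1 : Φ 1 = 1)

include hn h1 in
lemma Phi_real (v : C(Sph,ℂ)) (hv : ∀ ζ, (v ζ).im = 0) : (Φ v).im = 0 := by
  set β := (Φ v).im with hβ
  have key : ∀ t : ℝ, (β + t)^2 ≤ ‖v‖^2 + t^2 := by
    intro t
    set w : C(Sph,ℂ) := v + ((t:ℂ)*I) • (1:C(Sph,ℂ)) with hw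
    have hΦw : Φ w = Φ v + (t:ℂ)*I := by
      rw [hw, map_add, map_smul, h1, smul_eq_mul, mul_one]
    have hwb : ‖w‖ ≤ Real.sqrt (‖v‖^2 + t^2) := by
      refine (ContinuousMap.norm_le _ (Real.sqrt_nonneg _)).mpr ?_
      intro ζ
      have hwζ : w ζ = v ζ + (t:ℂ)*I := by simp [hw]
      have h2 : Complex.normSq (w ζ) = (v ζ).re^2 + t^2 := by
        rw [hwζ, Complex.normSq_apply]
        simp [hv ζ]
        ring
      have h3 : ‖w ζ‖ = Real.sqrt ((v ζ).re^2 + t^2) := by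
        rw [Complex.norm_def, h2]
      rw [h3]
      apply Real.sqrt_le_sqrt
      have h4 := Complex.abs_re_le_norm (v ζ)
      have h5 : ‖v ζ‖ ≤ ‖v‖ := v.norm_coe_le_norm ζ
      have h6 : (0:ℝ) ≤ ‖v ζ‖ := norm_nonneg _
      nlinarith [_root_.sq_abs ((v ζ).re), mul_self_le_mul_self (abs_nonneg ((v ζ).re)) (h4.trans h5)]
    have him : (Φ w).im = β + t := by rw [hΦw]; simp [hβ]
    have habs : ‖Φ w‖ ≤ Real.sqrt (‖v‖^2 + t^2) := by
      calc ‖Φ w‖ ≤ ‖Φ‖ * ‖w‖ := Φ.le_opNorm w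
        _ ≤ 1 * Real.sqrt (‖v‖^2 + t^2) := by
            apply mul_le_mul hn hwb (norm_nonneg _) zero_le_one
        _ = Real.sqrt (‖v‖^2 + t^2) := one_mul _
    have h7 : |(Φ w).im| ≤ ‖Φ w‖ := Complex.abs_im_le_norm (Φ w)
    have h8 : Real.sqrt (‖v‖^2 + t^2)^2 = ‖v‖^2 + t^2 := by
      rw [Real.sq_sqrt]; positivity
    rw [him] at h7
    calc (β + t)^2 = |β + t|^2 := (_root_.sq_abs _).symm
      _ ≤ Real.sqrt (‖v‖^2 + t^2)^2 := pow_le_pow_left₀ (abs_nonneg _) (h7.trans habs) 2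
      _ = ‖v‖^2 + t^2 := h8
  by_contra hβ0
  have h2βt : 2*β*((‖v‖^2+1)/(2*β)) = ‖v‖^2+1 := by field_simp
  have hk := key ((‖v‖^2+1)/(2*β))
  nlinarith [hk, h2βt, sq_nonneg β]

variable (hmom : ∀ m:ℕ, Φ (xi^m) = a^m)

include hn h1 hmom in
lemma Phi_star (m : ℕ) : Φ (star (xi^m)) = (starRingEnd ℂ) (a^m) := by
  set s := Φ (star (xi^m)) with hs
  have him_u : ∀ ζ, ((xi^m + star (xi^m)) ζ).im = 0 := by
    intro ζ
    simp [ContinuousMap.add_apply, ContinuousMap.star_apply, ← map_pow]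
  have hu := Phi_real hn h1 _ him_u
  rw [map_add, hmom, ← hs] at hu
  have him_w : ∀ ζ, ((I • (xi^m - star (xi^m))) ζ).im = 0 := by
    intro ζ
    simp [ContinuousMap.smul_apply, ContinuousMap.sub_apply, ContinuousMap.star_apply,
      Complex.mul_im, ← map_pow]
  have hw := Phi_real hn h1 _ him_w
  rw [map_smul, map_sub, hmom, ← hs, smul_eq_mul] at hw
  have hwre : (a^m - s).re = 0 := by
    simpa [Complex.mul_im] using hw
  apply Complex.ext
  · simp only [Complex.sub_re] at hwre
    rw [Complex.conj_re]
    linarith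
  · simp only [Complex.add_im] at hu
    rw [Complex.conj_im]
    linarith

/-! ### The power series -/

def pser (c : ℕ → ℂ) : FormalMultilinearSeries ℂ ℂ ℂ :=
  fun n => (c n) • ContinuousMultilinearMap.mkPiAlgebraFin ℂ n ℂ

lemma pser_radius {c : ℕ → ℂ} {M : ℝ} (hM : ∀ n, ‖c n‖ ≤ M) :
    (1:ENNReal) ≤ (pser c).radius := by
  have : ((1:NNReal) : ENNReal) ≤ (pser c).radius := by
    apply FormalMultilinearSeries.le_radius_of_bound _ M
    intro n
    have hb : ‖pser c n‖ ≤ ‖c n‖ := by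
      simp only [pser]
      refine (norm_smul_le (c n) (ContinuousMultilinearMap.mkPiAlgebraFin ℂ n ℂ)).trans ?_
      rw [ContinuousMultilinearMap.norm_mkPiAlgebraFin]
      simp
    have hone : ((1:NNReal):ℝ)^n = 1 := by simp
    rw [hone, mul_one]
    exact hb.trans (hM n)
  simpa using this

lemma pser_sum {c : ℕ → ℂ} (a : ℂ) : (pser c).sum a = ∑' n : ℕ, c n * a^n := by
  rw [FormalMultilinearSeries.sum]
  congr 1
  funext n
  rw [pser]
  simp [ContinuousMultilinearMap.mkPiAlgebraFin_apply, List.prod_ofFn]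

lemma pser_diff {c : ℕ → ℂ} {M : ℝ} (hM : ∀ n, ‖c n‖ ≤ M) :
    DifferentiableOn ℂ (fun a => ∑' n : ℕ, c n * a^n) (ball (0:ℂ) 1) := by
  have hr : 0 < (pser c).radius := lt_of_lt_of_le (by norm_num) (pser_radius hM)
  have hball := (pser c).hasFPowerSeriesOnBall hr
  have hdiff := hball.differentiableOn
  have hsub : ball (0:ℂ) 1 ⊆ EMetric.ball (0:ℂ) (pser c).radius := by
    have h1 : ball (0:ℂ) 1 = EMetric.ball (0:ℂ) ((1:NNReal):ENNReal) := by
      rw [EMetric.ball, Metric.eball_coe]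
      norm_num
    rw [h1]
    exact EMetric.ball_subset_ball (by simpa using pser_radius hM)
  have hd : DifferentiableOn ℂ (pser c).sum (ball (0:ℂ) 1) := hdiff.mono hsub
  apply hd.congr
  intro x _
  exact (pser_sum x).symm

/-! ### The evaluation functional on `A` and its extension -/

def rest (h : ℂ → ℂ) (hc : ContinuousOn h (closedBall (0:ℂ) 1)) : C(Sph, ℂ) :=
  ⟨fun ζ => h ζ, (hc.mono sphere_subset_closedBall).restrict⟩

variable {A : Set (ℂ → ℂ)}
variable (hadd : ∀ f ∈ A, ∀ g ∈ A, f + g ∈ A)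
    (hsmul : ∀ (c : ℂ), ∀ f ∈ A, c • f ∈ A)
    (hmax : ∀ f ∈ A, ∀ z ∈ ball (0:ℂ) 1, ‖f z‖ ≤ circleSup f)
    (h0 : (0:ℂ→ℂ) ∈ A)

include hadd hsmul hmax in
theorem agree {g₁ g₂ : ℂ → ℂ} (h₁ : g₁ ∈ A) (h₂ : g₂ ∈ A)
    (he : ∀ ζ : Sph, g₁ ζ = g₂ ζ) : ∀ z ∈ closedBall (0:ℂ) 1, g₁ z = g₂ z := by
  set d : ℂ → ℂ := g₁ + (-1:ℂ) • g₂ with hd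
  have hdA : d ∈ A := hadd g₁ h₁ _ (hsmul (-1) g₂ h₂)
  have hdz : ∀ ζ : Sph, d ζ = 0 := by
    intro ζ
    simp [hd, he ζ]
  have hsup : circleSup d = 0 := by
    rw [circleSup]
    have : ∀ ζ : Sph, ‖d ζ‖ = 0 := fun ζ => by rw [hdz ζ]; simp
    simp only [this]
    exact ciSup_const
  intro z hz
  have key : d z = 0 := by
    rcases lt_or_eq_of_le (mem_closedBall.mp hz) with h | h
    · have := hmax d hdA z (mem_ball.mpr h)
      rw [hsup] at this
      have h0' := le_antisymm this (norm_nonneg _)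
      exact norm_eq_zero.mp h0'
    · exact hdz ⟨z, by rwa [mem_sphere]⟩
  have h2 : g₁ z + (-1) * g₂ z = 0 := by simpa [hd] using key
  linear_combination h2

variable (A) in
def VA : Set C(Sph, ℂ) := {v | ∃ g, g ∈ A ∧ ∀ ζ : Sph, g ζ = v ζ}

include h0 hadd hsmul in
lemma VA_submodule_aux : ∃ V : Submodule ℂ C(Sph,ℂ), (V : Set C(Sph,ℂ)) = VA A := by
  refine ⟨{ carrier := VA A
            add_mem' := ?_
            zero_mem' := ⟨0, h0, fun ζ => rfl⟩
            smul_mem' := ?_ }, rfl⟩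
  · rintro v w ⟨g, hg, he⟩ ⟨g', hg', he'⟩
    exact ⟨g + g', hadd g hg g' hg', fun ζ => by simp [he ζ, he' ζ]⟩
  · rintro c v ⟨g, hg, he⟩
    exact ⟨c • g, hsmul c g hg, fun ζ => by simp [he ζ]⟩

include hadd hsmul hmax h0 in
lemma exists_Phi {a : ℂ} (ha : a ∈ ball (0:ℂ) 1) :
    ∃ Φ : C(Sph,ℂ) →L[ℂ] ℂ, ‖Φ‖ ≤ 1 ∧
      ∀ g (hg : g ∈ A) (hc : ContinuousOn g (closedBall (0:ℂ) 1)), Φ (rest g hc) = g a := by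
  obtain ⟨V, hV⟩ := VA_submodule_aux hadd hsmul h0
  have hmemVA : ∀ v : V, ∃ g, g ∈ A ∧ ∀ ζ : Sph, g ζ = (v:C(Sph,ℂ)) ζ := by
    intro v
    have h' : (v : C(Sph,ℂ)) ∈ (V : Set C(Sph,ℂ)) := v.2
    rw [hV] at h'
    exact h'
  set ev : V → ℂ := fun v => (hmemVA v).choose a with hev
  have ev_eq : ∀ (v : V) (g : ℂ → ℂ), g ∈ A → (∀ ζ : Sph, g ζ = (v:C(Sph,ℂ)) ζ) →
      ev v = g a := by
    intro v g hg he
    obtain ⟨hgA, hres⟩ := (hmemVA v).choose_spec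
    exact agree hadd hsmul hmax hgA hg (fun ζ => by rw [hres ζ, he ζ]) a
      (ball_subset_closedBall ha)
  have ev_bound : ∀ v : V, ‖ev v‖ ≤ 1 * ‖(v : C(Sph,ℂ))‖ := by
    intro v
    obtain ⟨g, hg, he⟩ := hmemVA v
    rw [ev_eq v g hg he, one_mul]
    calc ‖g a‖ ≤ circleSup g := hmax g hg a ha
      _ ≤ ‖(v : C(Sph,ℂ))‖ := by
          apply ciSup_le
          intro ζ
          rw [he ζ]
          exact (v : C(Sph,ℂ)).norm_coe_le_norm ζ
  have ev_add : ∀ v w : V, ev (v + w) = ev v + ev w := by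
    intro v w
    obtain ⟨g, hg, he⟩ := hmemVA v
    obtain ⟨g', hg', he'⟩ := hmemVA w
    rw [ev_eq v g hg he, ev_eq w g' hg' he',
      ev_eq (v+w) (g+g') (hadd g hg g' hg') (fun ζ => by simp [he ζ, he' ζ])]
    rfl
  have ev_smul : ∀ (c : ℂ) (v : V), ev (c • v) = c * ev v := by
    intro c v
    obtain ⟨g, hg, he⟩ := hmemVA v
    rw [ev_eq v g hg he, ev_eq (c • v) (c • g) (hsmul c g hg) (fun ζ => by simp [he ζ])]
    rfl
  set psiL : V →ₗ[ℂ] ℂ :=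
    { toFun := ev
      map_add' := ev_add
      map_smul' := fun c v => ev_smul c v } with hpsiL
  set psiC : V →L[ℂ] ℂ := psiL.mkContinuous 1 ev_bound with hpsiC
  obtain ⟨Φ, hext, hnorm⟩ := exists_extension_norm_eq V psiC
  refine ⟨Φ, ?_, ?_⟩
  · rw [hnorm]
    exact psiL.mkContinuous_norm_le zero_le_one ev_bound
  · intro g hg hc
    have hmem : rest g hc ∈ V := by
      rw [← SetLike.mem_coe, hV]
      exact ⟨g, hg, fun ζ => rfl⟩
    have hx := hext ⟨rest g hc, hmem⟩
    rw [hx]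
    exact ev_eq ⟨rest g hc, hmem⟩ g hg (fun ζ => rfl)

include hadd hsmul hmax h0 in
lemma main_rep (hsub : diskAlgebra ⊆ A) {f : ℂ → ℂ} (hf : f ∈ A)
    (hc : ContinuousOn f (closedBall (0:ℂ) 1)) {a : ℂ} (ha : a ∈ ball (0:ℂ) 1) :
    f a = Lfun a (rest f hc) := by
  have haN : ‖a‖ < 1 := by
    have := mem_ball.mp ha
    simpa [Complex.dist_eq] using this
  obtain ⟨Φ, hn, hΦA⟩ := exists_Phi hadd hsmul hmax h0 ha
  have hone : (fun _ : ℂ => (1:ℂ)) ∈ A := hsub ⟨continuousOn_const, differentiableOn_const 1⟩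
  have h1 : Φ 1 = 1 := by
    have hrest : rest (fun _ : ℂ => (1:ℂ)) continuousOn_const = (1 : C(Sph,ℂ)) := rfl
    have hx := hΦA _ hone continuousOn_const
    rw [hrest] at hx
    rw [hx]
  have hmom : ∀ m : ℕ, Φ (xi^m) = a^m := by
    intro m
    have hpm : (fun z : ℂ => z^m) ∈ A :=
      hsub ⟨(continuous_pow m).continuousOn, (differentiable_pow m).differentiableOn⟩
    have hrest : rest (fun z : ℂ => z^m) ((continuous_pow m).continuousOn) = xi^m := by
      apply ContinuousMap.ext
      intro ζ
      rfl
    have hx := hΦA _ hpm ((continuous_pow m).continuousOn)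
    rw [hrest] at hx
    exact hx
  have hstar := Phi_star hn h1 hmom
  have heq : Set.EqOn ⇑Φ ⇑(L haN) (W : Set C(Sph,ℂ)) := by
    intro v hv
    induction hv using Submodule.span_induction with
    | mem g hg =>
        rcases hg with ⟨m, rfl⟩ | ⟨m, rfl⟩
        · show Φ (xi^m) = L haN (xi^m)
          rw [hmom m, L_xi_pow haN m]
        · show Φ (star (xi^m)) = L haN (star (xi^m))
          rw [hstar m, L_star_xi_pow haN m, map_pow]
    | zero => simp
    | add u v hu hv pu pv => rw [map_add, map_add]; show _ = _; rw [pu, pv]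
    | smul c u hu pu => rw [map_smul, map_smul]; show _ = _; rw [pu]
  have hΦL : ⇑Φ = ⇑(L haN) := Continuous.ext_on W_dense Φ.continuous (L haN).continuous heq
  have hx := hΦA f hf hc
  calc f a = Φ (rest f hc) := hx.symm
    _ = L haN (rest f hc) := congrFun hΦL _
    _ = Lfun a (rest f hc) := rfl

include hadd hsmul hmax h0 in
lemma co_neg (hmul : ∀ f ∈ A, ∀ g ∈ A, f * g ∈ A) (hsub : diskAlgebra ⊆ A)
    {f : ℂ → ℂ} (hf : f ∈ A) (hc : ContinuousOn f (closedBall (0:ℂ) 1)) (k : ℕ) :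
    co (rest f hc) (-(k+1:ℕ)) = 0 := by
  set h : ℂ → ℂ := (fun z => z^(k+1)) * f with hh
  have hhA : h ∈ A := hmul _ (hsub ⟨(continuous_pow (k+1)).continuousOn,
    (differentiable_pow (k+1)).differentiableOn⟩) f hf
  have hhc : ContinuousOn h (closedBall (0:ℂ) 1) :=
    ((continuous_pow (k+1)).continuousOn).mul hc
  have h0b : (0:ℂ) ∈ ball (0:ℂ) 1 := mem_ball_self one_pos
  have hrep := main_rep hadd hsmul hmax h0 hsub hhA hhc h0b
  rw [Lfun_zero_eval] at hrep
  have hL : h 0 = 0 := by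
    show (0:ℂ)^(k+1) * f 0 = 0
    rw [zero_pow (Nat.succ_ne_zero k), zero_mul]
  have hco : co (rest h hhc) 0 = co (rest f hc) (-(k+1:ℕ)) := by
    rw [co, co]
    congr 1
    apply intervalIntegral.integral_congr
    intro θ _
    show Complex.exp (-((0:ℤ):ℂ) * θ * I) * h (q θ)
        = Complex.exp (-((-(k+1:ℕ) : ℤ):ℂ) * θ * I) * f (q θ)
    have hhq : h (q θ) = (Complex.exp (θ*I))^(k+1) * f (q θ) := rfl
    rw [hhq, ← Complex.exp_nat_mul]
    rw [show -((0:ℤ):ℂ) * (θ:ℂ) * I = 0 from by push_cast; ring]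
    rw [Complex.exp_zero, one_mul, ← mul_assoc]
    congr 2
    push_cast
    ring
  rw [← hco, ← hrep, hL]

end RudinAux
end

open RudinAux

/-- Rudin's theorem: an algebra of continuous functions on the closed disk satisfying the
weak maximum principle and containing the disk algebra equals the disk algebra. -/
theorem rudin_algebra_version (A : Set (ℂ → ℂ))
    (hcont : ∀ f ∈ A, ContinuousOn f (closedBall (0:ℂ) 1))
    (hadd : ∀ f ∈ A, ∀ g ∈ A, f + g ∈ A)
    (hmul : ∀ f ∈ A, ∀ g ∈ A, f * g ∈ A)
    (hsmul : ∀ (c : ℂ), ∀ f ∈ A, c • f ∈ A)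
    (hmax : ∀ f ∈ A, ∀ z ∈ ball (0:ℂ) 1, ‖f z‖ ≤ circleSup f)
    (hsub : diskAlgebra ⊆ A) :
    A = diskAlgebra := by
  apply Set.Subset.antisymm _ hsub
  intro f hf
  have hc := hcont f hf
  have h0 : (0:ℂ→ℂ) ∈ A := by
    apply hsub
    constructor
    · show ContinuousOn (fun _ : ℂ => (0:ℂ)) _
      exact continuousOn_const
    · show DifferentiableOn ℂ (fun _ : ℂ => (0:ℂ)) _
      exact differentiableOn_const 0
  refine ⟨hc, ?_⟩
  have hMb : ∀ n : ℕ, ‖co (rest f hc) (n:ℤ)‖ ≤ ‖rest f hc‖ :=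
    fun n => norm_co_le _ _
  have hdiff := pser_diff hMb
  apply hdiff.congr
  intro a ha
  have hrep := main_rep hadd hsmul hmax h0 hsub hf hc ha
  rw [hrep, Lfun]
  have h2 : ∀ k : ℕ, co (rest f hc) (-(k+1:ℕ)) * (starRingEnd ℂ a)^(k+1:ℕ) = 0 := by
    intro k
    rw [co_neg hadd hsmul hmax h0 hmul hsub hf hc k, zero_mul]
  rw [tsum_congr h2, tsum_zero, add_zero]
end

section
/- (Wermer) Let φ be continuous on 𝔻* ∪ 𝕋 and meromorphic in 𝔻, i.e., φ is holomorphic on 𝔻* and there exists m ∈ ℕ such that z ↦ z^m φ(z) extends holomorphically across 0. Then Σ is contained in the projective hull of γ: for every z ∈ 𝔻* there exists a constant C_z ≥ 1 such that |p(z, φ(z))| ≤ C_z^{deg p} · sup_{γ} |p| for every polynomial p ∈ ℂ[z, w]. -/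
open Complex Metric
open Topology Filter

/-- Evaluation of a polynomial in two variables at a point of `ℂ²`. -/
noncomputable def evalP (p : MvPolynomial (Fin 2) ℂ) (q : ℂ × ℂ) : ℂ :=
  MvPolynomial.eval ![q.1, q.2] p

/-- The sup of `|p|` over the graph `γ = {(ζ, φ(ζ)) : ζ ∈ 𝕋}`. -/
noncomputable def gammaSup (φ : ℂ → ℂ) (p : MvPolynomial (Fin 2) ℂ) : ℝ :=
  ⨆ ζ : sphere (0:ℂ) 1, ‖evalP p (ζ, φ ζ)‖

/-- Wermer: if `φ` is continuous on `𝔻* ∪ 𝕋` and meromorphic in `𝔻`, then the graph `Σ` of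
`φ` over `𝔻*` lies in the projective hull of the graph `γ` of `φ` over `𝕋`. -/
theorem graph_in_projective_hull (φ : ℂ → ℂ)
    (hcont : ContinuousOn φ ((ball (0:ℂ) 1 \ {0}) ∪ sphere (0:ℂ) 1))
    (hol : DifferentiableOn ℂ φ (ball (0:ℂ) 1 \ {0}))
    (hmero : ∃ (m : ℕ) (g : ℂ → ℂ), DifferentiableOn ℂ g (ball (0:ℂ) 1) ∧
      ∀ z ∈ ball (0:ℂ) 1 \ {0}, g z = z ^ m * φ z) :
    ∀ z ∈ ball (0:ℂ) 1 \ {0}, ∃ C : ℝ, 1 ≤ C ∧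
      ∀ p : MvPolynomial (Fin 2) ℂ,
        ‖evalP p (z, φ z)‖ ≤ C ^ p.totalDegree * gammaSup φ p := by
  obtain ⟨m, g, hg, hgeq⟩ := hmero
  -- the set where φ is continuous is the punctured closed ball
  have hset : (ball (0:ℂ) 1 \ {0}) ∪ sphere (0:ℂ) 1 = closedBall (0:ℂ) 1 \ {0} := by
    ext z
    simp only [Set.mem_union, Set.mem_diff, mem_ball, mem_sphere, mem_closedBall,
      Set.mem_singleton_iff, dist_zero_right]
    constructor
    · rintro (⟨h1, h2⟩ | h)
      · exact ⟨le_of_lt h1, h2⟩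
      · refine ⟨le_of_eq h, ?_⟩
        intro h0; rw [h0] at h; simp at h
    · rintro ⟨h1, h2⟩
      rcases lt_or_eq_of_le h1 with h | h
      · exact Or.inl ⟨h, h2⟩
      · exact Or.inr h
  have hφc : ContinuousOn φ (closedBall (0:ℂ) 1 \ {0}) := hset ▸ hcont
  intro z₀ hz₀
  obtain ⟨hz₀b, hz₀0⟩ := hz₀
  rw [Set.mem_singleton_iff] at hz₀0
  have habs : 0 < ‖z₀‖ := by
    simpa [norm_pos_iff] using hz₀0
  have habs1 : ‖z₀‖ < 1 := by simpa [mem_ball, dist_zero_right] using hz₀b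
  refine ⟨(1 / ‖z₀‖) ^ m, ?_, ?_⟩
  · exact one_le_pow₀ ((le_div_iff₀ habs).mpr (by simpa using habs1.le))
  intro p
  set d := p.totalDegree with hd
  -- explicit formula for evalP
  have heval : ∀ z w : ℂ, evalP p (z, w)
      = ∑ s ∈ p.support, MvPolynomial.coeff s p * z ^ (s 0) * w ^ (s 1) := by
    intro z w
    rw [evalP, MvPolynomial.eval_eq']
    refine Finset.sum_congr rfl fun s _ => ?_
    rw [Fin.prod_univ_two]
    simp [mul_assoc]
  -- the holomorphic extension
  set G : ℂ → ℂ := fun z =>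
    ∑ s ∈ p.support, MvPolynomial.coeff s p * z ^ (s 0 + m * (d - s 1)) * g z ^ (s 1) with hGdef
  have key : ∀ z ∈ ball (0:ℂ) 1 \ {0},
      z ^ (m * d) * evalP p (z, φ z) = G z := by
    intro z hz
    have hgz := hgeq z hz
    rw [heval, Finset.mul_sum, hGdef]
    refine Finset.sum_congr rfl fun s hs => ?_
    have h1 : s 1 ≤ d := by
      refine le_trans ?_ (MvPolynomial.le_totalDegree hs)
      rw [Finsupp.sum_fintype _ _ (fun _ => rfl), Fin.sum_univ_two]
      exact Nat.le_add_left _ _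
    obtain ⟨k, hk⟩ : ∃ k, d = s 1 + k := ⟨d - s 1, (Nat.add_sub_cancel' h1).symm⟩
    have h2 : d - s 1 = k := by omega
    rw [hgz, h2, hk]
    ring
  set F : ℂ → ℂ := fun z => if z = 0 then G 0 else z ^ (m * d) * evalP p (z, φ z) with hFdef
  have hFG : Set.EqOn F G (ball (0:ℂ) 1) := by
    intro z hz
    by_cases h0 : z = 0
    · simp [hFdef, h0]
    · rw [hFdef]
      simp only [h0, if_false]
      exact key z ⟨hz, h0⟩
  have hG : DifferentiableOn ℂ G (ball (0:ℂ) 1) := by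
    refine DifferentiableOn.fun_sum fun s _ => ?_
    exact (((differentiable_const _).differentiableOn.mul
      (differentiable_pow _).differentiableOn).mul (hg.pow _))
  have hFd : DifferentiableOn ℂ F (ball (0:ℂ) 1) := hG.congr hFG
  -- continuity of z ↦ z^(md) * evalP p (z, φ z) on the punctured closed ball
  have hev : ContinuousOn (fun z => z ^ (m * d) * evalP p (z, φ z))
      (closedBall (0:ℂ) 1 \ {0}) := by
    refine (continuous_pow _).continuousOn.mul ?_
    have : ContinuousOn (fun z => ∑ s ∈ p.support,
        MvPolynomial.coeff s p * z ^ (s 0) * φ z ^ (s 1)) (closedBall (0:ℂ) 1 \ {0}) := by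
      refine continuousOn_finset_sum _ fun s _ => ?_
      exact (continuousOn_const.mul (continuous_pow _).continuousOn).mul (hφc.pow _)
    exact this.congr fun z _ => heval z (φ z)
  have hFc : ContinuousOn F (closedBall (0:ℂ) 1) := by
    intro x hx
    by_cases hx0 : x = 0
    · subst hx0
      have h0b : (0:ℂ) ∈ ball (0:ℂ) 1 := by simp
      have hGc : ContinuousAt G 0 :=
        hG.continuousOn.continuousAt (isOpen_ball.mem_nhds h0b)
      have : ContinuousAt F 0 :=
        hGc.congr (Filter.eventuallyEq_of_mem (isOpen_ball.mem_nhds h0b) hFG).symm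
      exact this.continuousWithinAt
    · have hmem : closedBall (0:ℂ) 1 \ {0} ∈ 𝓝[closedBall (0:ℂ) 1] x := by
        rw [Set.diff_eq]
        exact Filter.inter_mem self_mem_nhdsWithin
          (mem_nhdsWithin_of_mem_nhds (isOpen_compl_singleton.mem_nhds hx0))
      have hcw : ContinuousWithinAt (fun z => z ^ (m * d) * evalP p (z, φ z))
          (closedBall (0:ℂ) 1) x :=
        (hev x ⟨hx, hx0⟩).mono_of_mem_nhdsWithin hmem
      refine hcw.congr_of_eventuallyEq ?_ ?_
      · filter_upwards [hmem] with z hz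
        rw [hFdef]; simp [show z ≠ 0 from fun h => hz.2 (by simp [h])]
      · rw [hFdef]; simp [hx0]
  have hdc : DiffContOnCl ℂ F (ball (0:ℂ) 1) :=
    ⟨hFd, by rwa [closure_ball (0:ℂ) one_ne_zero]⟩
  -- boundedness of the sup over the circle
  have hsub : sphere (0:ℂ) 1 ⊆ closedBall (0:ℂ) 1 \ {0} := by
    intro z hz
    rw [← hset]; exact Or.inr hz
  have hcontS : ContinuousOn (fun z => ‖evalP p (z, φ z)‖) (sphere (0:ℂ) 1) := by
    have h1 : ContinuousOn (fun z => evalP p (z, φ z)) (sphere (0:ℂ) 1) := by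
      have : ContinuousOn (fun z => ∑ s ∈ p.support,
          MvPolynomial.coeff s p * z ^ (s 0) * φ z ^ (s 1)) (sphere (0:ℂ) 1) := by
        refine continuousOn_finset_sum _ fun s _ => ?_
        exact (continuousOn_const.mul (continuous_pow _).continuousOn).mul
          ((hφc.mono hsub).pow _)
      exact this.congr fun z _ => heval z (φ z)
    exact continuous_norm.comp_continuousOn h1
  have hbdd : BddAbove (Set.range fun ζ : sphere (0:ℂ) 1 => ‖evalP p (ζ, φ ζ)‖) := by
    have := ((isCompact_sphere (0:ℂ) 1).image_of_continuousOn hcontS).bddAbove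
    rwa [Set.image_eq_range] at this
  -- boundary estimate
  have hbound : ∀ ζ ∈ frontier (ball (0:ℂ) 1), ‖F ζ‖ ≤ gammaSup φ p := by
    rw [frontier_ball (0:ℂ) one_ne_zero]
    intro ζ hζ
    have hζ1 : ‖ζ‖ = 1 := by simpa [dist_zero_right] using hζ
    have hζ0 : ζ ≠ 0 := by
      intro h; rw [h] at hζ1; simp at hζ1
    have : F ζ = ζ ^ (m * d) * evalP p (ζ, φ ζ) := by rw [hFdef]; simp [hζ0]
    rw [this]
    have : ‖ζ ^ (m * d) * evalP p (ζ, φ ζ)‖ = ‖evalP p (ζ, φ ζ)‖ := by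
      rw [norm_mul, norm_pow, hζ1, one_pow, one_mul]
    rw [this]
    exact le_ciSup hbdd ⟨ζ, hζ⟩
  have hmax : ‖F z₀‖ ≤ gammaSup φ p :=
    Complex.norm_le_of_forall_mem_frontier_norm_le isBounded_ball hdc hbound
      (subset_closure hz₀b)
  have hFz₀ : ‖F z₀‖ = ‖z₀‖ ^ (m * d) * ‖evalP p (z₀, φ z₀)‖ := by
    rw [hFdef]
    simp only [hz₀0, if_false]
    rw [norm_mul, norm_pow]
  rw [hFz₀] at hmax
  have hpow : ((1 / ‖z₀‖) ^ m) ^ d = 1 / ‖z₀‖ ^ (m * d) := by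
    rw [← pow_mul, one_div, one_div, ← inv_pow]
  rw [hpow, one_div, ← div_eq_inv_mul, le_div_iff₀ (pow_pos habs _), mul_comm]
  exact hmax
end
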